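/- Let f(x,y) = (y² − x)²·((1/4)x + y + 1) − x²·(y² − x)·(x + 2y) + x⁵ ∈ ℂ[x,y], and let g(x,y) = f(x + y² − y⁵ + (1/2)y⁶, y) be the polynomial obtained by the substitution x ↦ x + y² − y⁵ + (1/2)y⁶. Then: (i) every monomial x^i y^j occurring in g with nonzero coefficient satisfies 13·i + 2·j ≥ 26; (ii) the coefficient of x² in g is nonzero; and (iii) the coefficient of y¹³ in g is nonzero. -/
import Mathlib


open MvPolynomial

set_option maxRecDepth 100000

/-- The dehomogenization at `z = 1` of the plane quintic
`Q₂ = {(y²−xz)²((1/4)x+y+z) − x²(y²−xz)(x+2y) + x⁵ = 0}`,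
with `x = X 0` and `y = X 1`. -/
noncomputable def quinticF : MvPolynomial (Fin 2) ℂ :=
  ((X 1) ^ 2 - X 0) ^ 2 * (C (1/4) * X 0 + X 1 + 1)
    - (X 0) ^ 2 * ((X 1) ^ 2 - X 0) * (X 0 + 2 * X 1) + (X 0) ^ 5

/-- The polynomial obtained from `quinticF` by the substitution
`x ↦ x + y² − y⁵ + (1/2)y⁶` (the 6-jet coordinate change `x' = x − y² + y⁵ − (1/2)y⁶`). -/
noncomputable def quinticG : MvPolynomial (Fin 2) ℂ :=
  aeval ![X 0 + (X 1) ^ 2 - (X 1) ^ 5 + C (1/2) * (X 1) ^ 6, X 1] quinticF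

set_option maxHeartbeats 4000000 in
noncomputable def quinticE : MvPolynomial (Fin 2) ℂ :=
  C (-1) * X 0 ^ 0 * X 1 ^ 13 +
    C (25/16) * X 0 ^ 0 * X 1 ^ 14 +
    C (-9/4) * X 0 ^ 0 * X 1 ^ 15 +
    C (73/8) * X 0 ^ 0 * X 1 ^ 16 +
    C (-163/16) * X 0 ^ 0 * X 1 ^ 17 +
    C (177/32) * X 0 ^ 0 * X 1 ^ 18 +
    C (-12) * X 0 ^ 0 * X 1 ^ 19 +
    C (131/8) * X 0 ^ 0 * X 1 ^ 20 +
    C (-19/2) * X 0 ^ 0 * X 1 ^ 21 +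
    C (31/4) * X 0 ^ 0 * X 1 ^ 22 +
    C (-21/2) * X 0 ^ 0 * X 1 ^ 23 +
    C (121/16) * X 0 ^ 0 * X 1 ^ 24 +
    C (-7/2) * X 0 ^ 0 * X 1 ^ 25 +
    C (45/16) * X 0 ^ 0 * X 1 ^ 26 +
    C (-5/2) * X 0 ^ 0 * X 1 ^ 27 +
    C (5/4) * X 0 ^ 0 * X 1 ^ 28 +
    C (-5/16) * X 0 ^ 0 * X 1 ^ 29 +
    C (1/32) * X 0 ^ 0 * X 1 ^ 30 +
    C (1/2) * X 0 ^ 1 * X 1 ^ 7 +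
    C (-11/4) * X 0 ^ 1 * X 1 ^ 8 +
    C (-2) * X 0 ^ 1 * X 1 ^ 9 +
    C (15/4) * X 0 ^ 1 * X 1 ^ 10 +
    C (-59/4) * X 0 ^ 1 * X 1 ^ 11 +
    C (211/16) * X 0 ^ 1 * X 1 ^ 12 +
    C (-15/2) * X 0 ^ 1 * X 1 ^ 13 +
    C (129/4) * X 0 ^ 1 * X 1 ^ 14 +
    C (-34) * X 0 ^ 1 * X 1 ^ 15 +
    C (27/2) * X 0 ^ 1 * X 1 ^ 16 +
    C (-23) * X 0 ^ 1 * X 1 ^ 17 +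
    C (61/2) * X 0 ^ 1 * X 1 ^ 18 +
    C (-15) * X 0 ^ 1 * X 1 ^ 19 +
    C (15/2) * X 0 ^ 1 * X 1 ^ 20 +
    C (-10) * X 0 ^ 1 * X 1 ^ 21 +
    C (15/2) * X 0 ^ 1 * X 1 ^ 22 +
    C (-5/2) * X 0 ^ 1 * X 1 ^ 23 +
    C (5/16) * X 0 ^ 1 * X 1 ^ 24 +
    C (1) * X 0 ^ 2 * X 1 ^ 0 +
    C (1) * X 0 ^ 2 * X 1 ^ 1 +
    C (1/4) * X 0 ^ 2 * X 1 ^ 2 +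
    C (4) * X 0 ^ 2 * X 1 ^ 3 +
    C (3) * X 0 ^ 2 * X 1 ^ 4 +
    C (-3/4) * X 0 ^ 2 * X 1 ^ 5 +
    C (35/8) * X 0 ^ 2 * X 1 ^ 6 +
    C (-6) * X 0 ^ 2 * X 1 ^ 7 +
    C (9/2) * X 0 ^ 2 * X 1 ^ 8 +
    C (-30) * X 0 ^ 2 * X 1 ^ 9 +
    C (21) * X 0 ^ 2 * X 1 ^ 10 +
    C (-6) * X 0 ^ 2 * X 1 ^ 11 +
    C (63/2) * X 0 ^ 2 * X 1 ^ 12 +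
    C (-30) * X 0 ^ 2 * X 1 ^ 13 +
    C (15/2) * X 0 ^ 2 * X 1 ^ 14 +
    C (-10) * X 0 ^ 2 * X 1 ^ 15 +
    C (15) * X 0 ^ 2 * X 1 ^ 16 +
    C (-15/2) * X 0 ^ 2 * X 1 ^ 17 +
    C (5/4) * X 0 ^ 2 * X 1 ^ 18 +
    C (1/4) * X 0 ^ 3 * X 1 ^ 0 +
    C (2) * X 0 ^ 3 * X 1 ^ 1 +
    C (3) * X 0 ^ 3 * X 1 ^ 2 +
    C (10) * X 0 ^ 3 * X 1 ^ 4 +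
    C (-4) * X 0 ^ 3 * X 1 ^ 5 +
    C (2) * X 0 ^ 3 * X 1 ^ 6 +
    C (-20) * X 0 ^ 3 * X 1 ^ 7 +
    C (10) * X 0 ^ 3 * X 1 ^ 8 +
    C (10) * X 0 ^ 3 * X 1 ^ 10 +
    C (-10) * X 0 ^ 3 * X 1 ^ 11 +
    C (5/2) * X 0 ^ 3 * X 1 ^ 12 +
    C (1) * X 0 ^ 4 * X 1 ^ 0 +
    C (5) * X 0 ^ 4 * X 1 ^ 2 +
    C (-5) * X 0 ^ 4 * X 1 ^ 5 +
    C (5/2) * X 0 ^ 4 * X 1 ^ 6 +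
    C (1) * X 0 ^ 5 * X 1 ^ 0

lemma quintic_term_eq (c : ℂ) (i j : ℕ) :
    (C c * X 0 ^ i * X 1 ^ j : MvPolynomial (Fin 2) ℂ) =
      monomial (Finsupp.single 0 i + Finsupp.single 1 j) c := by
  rw [X_pow_eq_monomial, X_pow_eq_monomial, mul_assoc, monomial_mul, C_mul_monomial]
  norm_num

lemma quintic_single_eq (i j m n : ℕ) :
    (Finsupp.single (0 : Fin 2) i + Finsupp.single 1 j =
      Finsupp.single 0 m + Finsupp.single 1 n) ↔ (i = m ∧ j = n) := by
  constructor
  · intro h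
    refine ⟨?_, ?_⟩
    · simpa using DFunLike.congr_fun h 0
    · simpa using DFunLike.congr_fun h 1
  · rintro ⟨rfl, rfl⟩; rfl

set_option maxHeartbeats 4000000 in
lemma quinticG_eq : quinticG = quinticE := by
  apply MvPolynomial.funext
  intro v
  simp only [quinticG, quinticF, quinticE, map_add, map_sub, map_mul, map_pow, map_one,
    map_ofNat, aeval_X, aeval_C, algebraMap_eq, Matrix.cons_val_zero, Matrix.cons_val_one,
    Matrix.head_cons, eval_add, eval_sub, eval_mul, eval_pow, eval_C, eval_X]
  ring

set_option maxHeartbeats 4000000 in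
/-- In the adapted coordinates, the quintic `Q₂` is `x'² = a·y¹³ + h.o.t.` with `a ≠ 0`:
(i) every monomial `x^i y^j` occurring in `quinticG` satisfies `13·i + 2·j ≥ 26`;
(ii) the coefficient of `x²` is nonzero; (iii) the coefficient of `y¹³` is nonzero. -/
theorem stmt_2 :
    (∀ d ∈ quinticG.support, 13 * d 0 + 2 * d 1 ≥ 26) ∧
    coeff (Finsupp.single 0 2) quinticG ≠ 0 ∧
    coeff (Finsupp.single 1 13) quinticG ≠ 0 := by
  refine ⟨?_, ?_, ?_⟩
  · intro d hd
    by_contra hlt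
    push_neg at hlt
    rw [mem_support_iff, quinticG_eq] at hd
    apply hd
    have hd' : d = Finsupp.single 0 (d 0) + Finsupp.single 1 (d 1) := by
      ext a; fin_cases a <;> simp [Finsupp.single_apply]
    rw [hd']
    obtain ⟨m, hm⟩ : ∃ m, d 0 = m := ⟨_, rfl⟩
    obtain ⟨n, hn⟩ : ∃ n, d 1 = n := ⟨_, rfl⟩
    rw [hm, hn] at hlt ⊢
    have hm1 : m ≤ 1 := by omega
    have hn1 : n ≤ 12 := by omega
    interval_cases m <;> interval_cases n <;>
      first
        | omega
        | (simp only [quinticE, quintic_term_eq, coeff_add, coeff_monomial,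
            quintic_single_eq]; norm_num)
  · have h2 : (Finsupp.single (0 : Fin 2) 2 : Fin 2 →₀ ℕ) =
        Finsupp.single 0 2 + Finsupp.single 1 0 := by simp
    rw [quinticG_eq, h2]
    simp only [quinticE, quintic_term_eq, coeff_add, coeff_monomial, quintic_single_eq]
    norm_num
  · have h13 : (Finsupp.single (1 : Fin 2) 13 : Fin 2 →₀ ℕ) =
        Finsupp.single 0 0 + Finsupp.single 1 13 := by simp
    rw [quinticG_eq, h13]
    simp only [quinticE, quintic_term_eq, coeff_add, coeff_monomial, quintic_single_eq]
    norm_num
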